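/- For all positive integers r, k, s, t where s and t are powers of 2 and t ≥ s ≥ 2^{k−1}, we have f_{r,k}(t,s) ≤ r·2^{2k−2}·(t/s)², where f_{r,k}(t,s) is the maximum number of rows in a binary matrix with t columns, each row containing at least s 1-entries, that does not contain the all-ones r×k matrix J_{r,k} as an interval minor. The proof may use the recurrence f_{r,k}(t,s) ≤ 2·f_{r,k}(t/2, s) + 2·f_{r,k−1}(t/2, s/2) valid for even s ≤ t, together with the base cases f_{r,k}(t,s) = 0 for s > t and f_{r,1}(t,s) = r−1 for t ≥ s ≥ 1. -/

import Mathlib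

open Asymptotics

noncomputable section

/-- The all-ones matrix `J_{r,k}` is an interval minor of `A`: the rows and columns of `A`
can be partitioned into `r` (resp. `k`) consecutive nonempty intervals such that every
block contains a 1-entry. -/
def hasJminor {n t : ℕ} (r k : ℕ) (A : Fin n → Fin t → Bool) : Prop :=
  ∃ f : Fin n → Fin r, ∃ g : Fin t → Fin k,
    Monotone f ∧ Monotone g ∧ Function.Surjective f ∧ Function.Surjective g ∧
    ∀ (i : Fin r) (j : Fin k), ∃ p q, f p = i ∧ g q = j ∧ A p q = true

/-- `f_{r,k}(t,s)`: the maximum number of rows of a binary matrix with `t` columns,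
at least `s` 1-entries in every row, avoiding `J_{r,k}` as an interval minor. -/
def frk (r k t s : ℕ) : ℕ :=
  sSup {h : ℕ | ∃ A : Fin h → Fin t → Bool, ¬ hasJminor r k A ∧
    ∀ i : Fin h, s ≤ Nat.card {j : Fin t // A i j = true}}



open Finset

lemma exists_extension {m h r : ℕ} (e : Fin m → Fin h) (he : StrictMono e)
    (f : Fin m → Fin r) (hfm : Monotone f) (hm : 0 < m) :
    ∃ F : Fin h → Fin r, Monotone F ∧ (∀ i, F (e i) = f i) := by
  classical
  set S : Fin h → Finset (Fin m) := fun p => univ.filter (fun i => e i ≤ p) with hS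
  refine ⟨fun p => if hp : (S p).Nonempty then f ((S p).max' hp) else f ⟨0, hm⟩, ?_, ?_⟩
  · intro p p' hpp
    have hsub : S p ⊆ S p' := by
      intro i hi
      simp only [hS, mem_filter, mem_univ, true_and] at hi ⊢
      exact le_trans hi hpp
    by_cases hp : (S p).Nonempty
    · have hp' : (S p').Nonempty := hp.mono hsub
      simp only [dif_pos hp, dif_pos hp']
      exact hfm (le_max' _ _ (hsub (max'_mem _ hp)))
    · simp only [dif_neg hp]
      by_cases hp' : (S p').Nonempty
      · simp only [dif_pos hp']
        exact hfm (Fin.mk_le_mk.mpr (Nat.zero_le _))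
      · simp only [dif_neg hp', le_refl]
  · intro i
    have hmem : i ∈ S (e i) := by simp [hS]
    have hne : (S (e i)).Nonempty := ⟨i, hmem⟩
    have hmax : (S (e i)).max' hne = i := by
      refine le_antisymm ?_ (le_max' _ _ hmem)
      apply max'_le
      intro y hy
      simp only [hS, mem_filter, mem_univ, true_and] at hy
      exact he.le_iff_le.mp hy
    simp [dif_pos hne, hmax]

lemma extendMinor {h t m u r k : ℕ} (hr : 1 ≤ r) (hk : 1 ≤ k)
    {e : Fin m → Fin h} {c : Fin u → Fin t}
    (he : StrictMono e) (hc : StrictMono c) {A : Fin h → Fin t → Bool}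
    (H : hasJminor r k (fun i j => A (e i) (c j))) : hasJminor r k A := by
  obtain ⟨f, g, hfm, hgm, hfs, hgs, hw⟩ := H
  have hm : 0 < m := by
    obtain ⟨p, -⟩ := hfs ⟨0, hr⟩
    exact p.pos
  have hu : 0 < u := by
    obtain ⟨q, -⟩ := hgs ⟨0, hk⟩
    exact q.pos
  obtain ⟨F, hFm, hFe⟩ := exists_extension e he f hfm hm
  obtain ⟨G, hGm, hGc⟩ := exists_extension c hc g hgm hu
  refine ⟨F, G, hFm, hGm, ?_, ?_, ?_⟩
  · intro i; obtain ⟨p, hp⟩ := hfs i; exact ⟨e p, by rw [hFe, hp]⟩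
  · intro j; obtain ⟨q, hq⟩ := hgs j; exact ⟨c q, by rw [hGc, hq]⟩
  · intro i j
    obtain ⟨p, q, hp, hq, hA⟩ := hw i j
    exact ⟨e p, c q, by rw [hFe, hp], by rw [hGc, hq], hA⟩

lemma baseJ {r b a h : ℕ} (hr : 1 ≤ r) (A : Fin h → Fin (2^b) → Bool)
    (hno : ¬ hasJminor r 1 A)
    (hrow : ∀ i, 2^a ≤ Nat.card {j : Fin (2^b) // A i j = true}) : h < r := by
  by_contra hc
  push_neg at hc
  apply hno
  have hone : ∀ p : Fin h, ∃ q, A p q = true := by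
    intro p
    have h1 : 0 < Nat.card {j : Fin (2^b) // A p j = true} :=
      lt_of_lt_of_le (Nat.pow_pos (n := a) (by norm_num)) (hrow p)
    have h2 : Nonempty {j : Fin (2^b) // A p j = true} := Nat.card_pos_iff.mp h1 |>.1
    obtain ⟨q, hq⟩ := h2
    exact ⟨q, hq⟩
  refine ⟨fun p => ⟨min p.val (r-1), by omega⟩, fun _ => ⟨0, by omega⟩, ?_, ?_, ?_, ?_, ?_⟩
  · intro p p' hpp
    exact Fin.mk_le_mk.mpr (min_le_min hpp le_rfl)
  · intro _ _ _; rfl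
  · intro i
    refine ⟨⟨i.val, lt_of_lt_of_le i.isLt hc⟩, ?_⟩
    apply Fin.ext
    simp only []
    exact Nat.min_eq_left (by omega)
  · intro j
    exact ⟨⟨0, by positivity⟩, Subsingleton.elim _ _⟩
  · intro i j
    obtain ⟨q, hq⟩ := hone ⟨i.val, lt_of_lt_of_le i.isLt hc⟩
    refine ⟨⟨i.val, lt_of_lt_of_le i.isLt hc⟩, q, ?_, Subsingleton.elim _ _, hq⟩
    apply Fin.ext
    show min i.val (r - 1) = i.val
    exact Nat.min_eq_left (by omega)

lemma appendLast {m n r k' : ℕ} {B : Fin m → Fin (n+n) → Bool} (hn : 0 < n)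
    (H : hasJminor r k' (fun i j => B i (Fin.castAdd n j)))
    (hright : ∀ i : Fin m, ∃ q : Fin (n+n), n ≤ q.val ∧ B i q = true) :
    hasJminor r (k'+1) B := by
  obtain ⟨f, g, hfm, hgm, hfs, hgs, hw⟩ := H
  refine ⟨f, fun q => if hq : q.val < n then (g ⟨q.val, hq⟩).castSucc else Fin.last k',
    hfm, ?_, hfs, ?_, ?_⟩
  · intro q q' hqq
    by_cases hq : q.val < n
    · by_cases hq' : q'.val < n
      · simp only [dif_pos hq, dif_pos hq']
        exact Fin.castSucc_le_castSucc_iff.mpr (hgm (Fin.mk_le_mk.mpr hqq))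
      · simp only [dif_pos hq, dif_neg hq']
        exact Fin.le_last _
    · have hq' : ¬ q'.val < n := by omega
      simp only [dif_neg hq, dif_neg hq', le_refl]
  · intro i
    rcases Fin.eq_castSucc_or_eq_last i with ⟨j, rfl⟩ | rfl
    · obtain ⟨q, hq⟩ := hgs j
      refine ⟨Fin.castAdd n q, ?_⟩
      have hlt : (Fin.castAdd n q).val < n := q.isLt
      simp only [dif_pos hlt]
      exact congrArg Fin.castSucc hq
    · refine ⟨⟨n, by omega⟩, ?_⟩
      simp only [dif_neg (lt_irrefl n)]
  · intro i jj
    rcases Fin.eq_castSucc_or_eq_last jj with ⟨j, rfl⟩ | rfl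
    · obtain ⟨p, q, hp, hq, hA⟩ := hw i j
      refine ⟨p, Fin.castAdd n q, hp, ?_, hA⟩
      have hlt : (Fin.castAdd n q).val < n := q.isLt
      simp only [dif_pos hlt]
      exact congrArg Fin.castSucc hq
    · obtain ⟨p, hp⟩ := hfs i
      obtain ⟨q, hqn, hA⟩ := hright p
      refine ⟨p, q, hp, ?_, hA⟩
      simp only [dif_neg (by omega : ¬ q.val < n)]

lemma appendFirst {m n r k' : ℕ} {B : Fin m → Fin (n+n) → Bool} (hn : 0 < n)
    (H : hasJminor r k' (fun i j => B i (Fin.natAdd n j)))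
    (hleft : ∀ i : Fin m, ∃ q : Fin (n+n), q.val < n ∧ B i q = true) :
    hasJminor r (k'+1) B := by
  obtain ⟨f, g, hfm, hgm, hfs, hgs, hw⟩ := H
  refine ⟨f, fun q => if hq : q.val < n then 0 else (g ⟨q.val - n, by omega⟩).succ,
    hfm, ?_, hfs, ?_, ?_⟩
  · intro q q' hqq
    by_cases hq : q.val < n
    · by_cases hq' : q'.val < n
      · simp only [dif_pos hq, dif_pos hq', le_refl]
      · simp only [dif_pos hq, dif_neg hq']
        exact Fin.zero_le _
    · have hq' : ¬ q'.val < n := by omega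
      simp only [dif_neg hq, dif_neg hq']
      exact Fin.succ_le_succ_iff.mpr (hgm (Fin.mk_le_mk.mpr (by
        have : (q : ℕ) ≤ q' := hqq
        omega)))
  · intro i
    rcases Fin.eq_zero_or_eq_succ i with rfl | ⟨j, rfl⟩
    · refine ⟨⟨0, by omega⟩, ?_⟩
      simp only [dif_pos hn]
    · obtain ⟨q, hq⟩ := hgs j
      refine ⟨Fin.natAdd n q, ?_⟩
      have hlt : ¬ (Fin.natAdd n q).val < n := by simp
      simp only [dif_neg hlt]
      have heq : (⟨(Fin.natAdd n q).val - n, by omega⟩ : Fin n) = q := by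
        apply Fin.ext; simp
      rw [heq, hq]
  · intro i jj
    rcases Fin.eq_zero_or_eq_succ jj with rfl | ⟨j, rfl⟩
    · obtain ⟨p, hp⟩ := hfs i
      obtain ⟨q, hqn, hA⟩ := hleft p
      refine ⟨p, q, hp, ?_, hA⟩
      simp only [dif_pos hqn]
    · obtain ⟨p, q, hp, hq, hA⟩ := hw i j
      refine ⟨p, Fin.natAdd n q, hp, ?_, hA⟩
      have hlt : ¬ (Fin.natAdd n q).val < n := by simp
      simp only [dif_neg hlt]
      have heq : (⟨(Fin.natAdd n q).val - n, by omega⟩ : Fin n) = q := by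
        apply Fin.ext; simp
      rw [heq, hq]

def cnt {N : ℕ} (v : Fin N → Bool) : ℕ := (univ.filter fun j => v j = true).card

lemma natCard_eq_cnt {N : ℕ} (v : Fin N → Bool) :
    Nat.card {j : Fin N // v j = true} = cnt v := by
  rw [Nat.card_eq_fintype_card, Fintype.card_subtype]
  rfl

lemma cnt_le {N : ℕ} (v : Fin N → Bool) : cnt v ≤ N := by
  refine le_trans (card_filter_le _ _) ?_
  simp

lemma cnt_split {n : ℕ} (v : Fin (n+n) → Bool) :
    cnt v = cnt (fun j : Fin n => v (Fin.castAdd n j))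
      + cnt (fun j : Fin n => v (Fin.natAdd n j)) := by
  simp only [cnt, Finset.card_filter]
  exact Fin.sum_univ_add _

lemma cnt_pos {N : ℕ} (v : Fin N → Bool) (hv : 0 < cnt v) : ∃ j, v j = true := by
  obtain ⟨j, hj⟩ := Finset.card_pos.mp hv
  exact ⟨j, (Finset.mem_filter.mp hj).2⟩

lemma natCard_cast {N M : ℕ} (hNM : N = M) (v : Fin M → Bool) :
    Nat.card {j : Fin N // v (Fin.cast hNM j) = true}
      = Nat.card {j : Fin M // v j = true} :=
  Nat.card_congr (Equiv.subtypeEquiv (finCongr hNM) (fun j => by simp))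

lemma rowsub {h : ℕ} (S : Finset (Fin h)) :
    ∃ e : Fin S.card → Fin h, StrictMono e ∧ ∀ i, e i ∈ S := by
  refine ⟨fun i => (S.orderIsoOfFin rfl i : Fin h), ?_, fun i => (S.orderIsoOfFin rfl i).2⟩
  intro x y hxy
  exact Subtype.coe_lt_coe.mpr ((S.orderIsoOfFin rfl).strictMono hxy)

lemma mainBound (r : ℕ) (hr : 1 ≤ r) :
    ∀ k b a h : ℕ, 1 ≤ k → k - 1 ≤ a → a ≤ b →
      ∀ A : Fin h → Fin (2^b) → Bool, ¬ hasJminor r k A →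
      (∀ i, 2^a ≤ Nat.card {j : Fin (2^b) // A i j = true}) →
      h ≤ r * 4^(k-1) * 4^(b-a) := by
  intro k
  induction k with
  | zero => intro b a h hk; exact absurd hk (by omega)
  | succ k ihk =>
    rcases Nat.eq_zero_or_pos k with rfl | hk1
    · -- the case k+1 = 1
      intro b a h _ _ hab A hno hrow
      have hlt := baseJ hr A hno hrow
      have h4 : 1 ≤ 4^(b-a) := Nat.one_le_pow _ _ (by norm_num)
      have : r ≤ r * 4^(b-a) := Nat.le_mul_of_pos_right r (by omega)
      simpa using by omega
    · intro b
      induction b with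
      | zero => intro a h _ hka hab; exact absurd hab (by omega)
      | succ b' ihb =>
        intro a h _ hka hab A hno hrow
        classical
        set n := 2^b' with hn
        have hnpos : 0 < n := Nat.pow_pos (by norm_num)
        have hnn : 2^(b'+1) = n + n := by rw [pow_succ]; omega
        set A' : Fin h → Fin (n+n) → Bool := fun i j => A i (Fin.cast hnn.symm j) with hA'
        have hcastSM : StrictMono (Fin.cast hnn.symm) := fun x y hxy => by
          have h2 : (x:ℕ) < y := hxy
          rw [Fin.lt_def, Fin.coe_cast, Fin.coe_cast]
          exact h2
        have hcaSM : StrictMono (Fin.castAdd n : Fin n → Fin (n+n)) := fun x y hxy => by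
          have h2 : (x:ℕ) < y := hxy
          rw [Fin.lt_def, Fin.coe_castAdd, Fin.coe_castAdd]
          exact h2
        have hnaSM : StrictMono (Fin.natAdd n : Fin n → Fin (n+n)) := fun x y hxy => by
          have h2 : (x:ℕ) < y := hxy
          rw [Fin.lt_def, Fin.coe_natAdd, Fin.coe_natAdd]
          omega
        have hno' : ¬ hasJminor r (k+1) A' := fun H =>
          hno (extendMinor (e := id) (c := Fin.cast hnn.symm) hr (by omega)
            strictMono_id hcastSM H)
        set cl : Fin h → ℕ := fun i => cnt (fun j : Fin n => A' i (Fin.castAdd n j)) with hcl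
        set cr : Fin h → ℕ := fun i => cnt (fun j : Fin n => A' i (Fin.natAdd n j)) with hcr
        have htot : ∀ i, 2^a ≤ cl i + cr i := by
          intro i
          rw [← cnt_split (A' i), ← natCard_eq_cnt]
          rw [natCard_cast hnn.symm (A i)]
          exact hrow i
        have hclle : ∀ i, cl i ≤ n := fun i => cnt_le _
        have hcrle : ∀ i, cr i ≤ n := fun i => cnt_le _
        set P1 : Fin h → Prop := fun i => 2^a ≤ cl i with hP1
        set P2 : Fin h → Prop := fun i => 2^a ≤ cr i with hP2
        set P3 : Fin h → Prop := fun i => 2^(a-1) ≤ cl i with hP3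
        set S1 := univ.filter P1 with hS1
        set T1 := univ.filter (fun i => ¬ P1 i) with hT1
        set S2 := T1.filter P2 with hS2
        set T2 := T1.filter (fun i => ¬ P2 i) with hT2
        set S3 := T2.filter P3 with hS3
        set S4 := T2.filter (fun i => ¬ P3 i) with hS4
        have hcard : S1.card + (S2.card + (S3.card + S4.card)) = h := by
          rw [hS3, hS4, card_filter_add_card_filter_not (p := P3),
            hS2, hT2, card_filter_add_card_filter_not (p := P2),
            hS1, hT1, card_filter_add_card_filter_not (p := P1)]
          simp
        -- bound on S1
        have hb1 : a ≤ b' → S1.card ≤ r * 4^(k+1-1) * 4^(b'-a) := by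
          intro hab'
          obtain ⟨e, heSM, heS⟩ := rowsub S1
          refine ihb a S1.card (by omega) hka hab'
            (fun i j => A' (e i) (Fin.castAdd n j)) ?_ ?_
          · intro H
            exact hno' (extendMinor hr (by omega) heSM hcaSM H)
          · intro i
            rw [natCard_eq_cnt]
            have := heS i
            rw [hS1, mem_filter] at this
            exact this.2
        have hb2 : a ≤ b' → S2.card ≤ r * 4^(k+1-1) * 4^(b'-a) := by
          intro hab'
          obtain ⟨e, heSM, heS⟩ := rowsub S2
          refine ihb a S2.card (by omega) hka hab'
            (fun i j => A' (e i) (Fin.natAdd n j)) ?_ ?_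
          · intro H
            exact hno' (extendMinor hr (by omega) heSM hnaSM H)
          · intro i
            rw [natCard_eq_cnt]
            have := heS i
            rw [hS2, mem_filter] at this
            exact this.2
        -- if a = b'+1 then S1, S2 empty
        have he1 : ¬ a ≤ b' → S1.card = 0 := by
          intro hab'
          rw [Finset.card_eq_zero, Finset.eq_empty_iff_forall_notMem]
          intro i hi
          rw [hS1, mem_filter] at hi
          have h1 : cl i ≤ n := hclle i
          have h2 : (2:ℕ)^b' < 2^a := Nat.pow_lt_pow_right (by norm_num) (by omega)
          have := hi.2
          rw [hP1] at this
          omega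
        have he2 : ¬ a ≤ b' → S2.card = 0 := by
          intro hab'
          rw [Finset.card_eq_zero, Finset.eq_empty_iff_forall_notMem]
          intro i hi
          rw [hS2, mem_filter] at hi
          have h1 : cr i ≤ n := hcrle i
          have h2 : (2:ℕ)^b' < 2^a := Nat.pow_lt_pow_right (by norm_num) (by omega)
          have := hi.2
          rw [hP2] at this
          omega
        have hpa : (2:ℕ)^a = 2^(a-1) + 2^(a-1) := by
          have h1 : a - 1 + 1 = a := by omega
          calc (2:ℕ)^a = 2^(a-1+1) := by rw [h1]
          _ = 2^(a-1)*2 := by rw [pow_succ]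
          _ = 2^(a-1) + 2^(a-1) := by omega
        -- bound on S3
        have hb3 : S3.card ≤ r * 4^(k-1) * 4^(b'-(a-1)) := by
          obtain ⟨e, heSM, heS⟩ := rowsub S3
          have hmem : ∀ i, ¬ P1 (e i) ∧ ¬ P2 (e i) ∧ P3 (e i) := by
            intro i
            have := heS i
            rw [hS3, mem_filter, hT2, mem_filter, hT1, mem_filter] at this
            exact ⟨this.1.1.2, this.1.2, this.2⟩
          refine ihk b' (a-1) S3.card hk1 (by omega) (by omega)
            (fun i j => A' (e i) (Fin.castAdd n j)) ?_ ?_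
          · intro H
            have hright : ∀ i, ∃ q : Fin (n+n), n ≤ q.val ∧ A' (e i) q = true := by
              intro i
              have h1 : ¬ P1 (e i) := (hmem i).1
              rw [hP1] at h1
              have h2 := htot (e i)
              have h3 : 0 < cr (e i) := by omega
              obtain ⟨j, hj⟩ := cnt_pos _ h3
              exact ⟨Fin.natAdd n j, by simp, hj⟩
            have H2 : hasJminor r (k+1) (fun i (j : Fin (n+n)) => A' (e i) j) :=
              appendLast hnpos H hright
            exact hno' (extendMinor (c := (id : Fin (n+n) → Fin (n+n))) hr (by omega)
              heSM strictMono_id H2)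
          · intro i
            rw [natCard_eq_cnt]
            have := (hmem i).2.2
            rw [hP3] at this
            exact this
        -- bound on S4
        have hb4 : S4.card ≤ r * 4^(k-1) * 4^(b'-(a-1)) := by
          obtain ⟨e, heSM, heS⟩ := rowsub S4
          have hmem : ∀ i, ¬ P1 (e i) ∧ ¬ P2 (e i) ∧ ¬ P3 (e i) := by
            intro i
            have := heS i
            rw [hS4, mem_filter, hT2, mem_filter, hT1, mem_filter] at this
            exact ⟨this.1.1.2, this.1.2, this.2⟩
          refine ihk b' (a-1) S4.card hk1 (by omega) (by omega)
            (fun i j => A' (e i) (Fin.natAdd n j)) ?_ ?_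
          · intro H
            have hleft : ∀ i, ∃ q : Fin (n+n), q.val < n ∧ A' (e i) q = true := by
              intro i
              have h1 : ¬ P2 (e i) := (hmem i).2.1
              rw [hP2] at h1
              have h2 := htot (e i)
              have h3 : 0 < cl (e i) := by omega
              obtain ⟨j, hj⟩ := cnt_pos _ h3
              exact ⟨Fin.castAdd n j, by simp, hj⟩
            have H2 : hasJminor r (k+1) (fun i (j : Fin (n+n)) => A' (e i) j) :=
              appendFirst hnpos H hleft
            exact hno' (extendMinor (c := (id : Fin (n+n) → Fin (n+n))) hr (by omega)
              heSM strictMono_id H2)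
          · intro i
            rw [natCard_eq_cnt]
            have h1 : ¬ P3 (e i) := (hmem i).2.2
            rw [hP3] at h1
            have h2 := htot (e i)
            have : 2^(a-1) ≤ cr (e i) := by omega
            exact this
        -- arithmetic
        by_cases hab' : a ≤ b'
        · have e1 : (4:ℕ)^(k+1-1) = 4 * 4^(k-1) := by
            have h1 : k+1-1 = (k-1)+1 := by omega
            rw [h1, pow_succ]; ring
          have e2 : (4:ℕ)^(b'+1-a) = 4 * 4^(b'-a) := by
            have h1 : b'+1-a = (b'-a)+1 := by omega
            rw [h1, pow_succ]; ring
          have e3 : (4:ℕ)^(b'-(a-1)) = 4 * 4^(b'-a) := by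
            have h1 : b'-(a-1) = (b'-a)+1 := by omega
            rw [h1, pow_succ]; ring
          have hM1 : r * 4^(k+1-1) * 4^(b'-a) = 4 * (r * 4^(k-1) * 4^(b'-a)) := by
            rw [e1]; ring
          have hM2 : r * 4^(k-1) * 4^(b'-(a-1)) = 4 * (r * 4^(k-1) * 4^(b'-a)) := by
            rw [e3]; ring
          have hgoal : r * 4^(k+1-1) * 4^(b'+1-a) = 16 * (r * 4^(k-1) * 4^(b'-a)) := by
            rw [e1, e2]; ring
          have hc1 := hb1 hab'
          have hc2 := hb2 hab'
          rw [hM1] at hc1 hc2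
          rw [hM2] at hb3 hb4
          rw [hgoal]
          omega
        · have hc1 := he1 hab'
          have hc2 := he2 hab'
          have e3 : b'-(a-1) = 0 := by omega
          have e4 : b'+1-a = 0 := by omega
          rw [e3] at hb3 hb4
          rw [e4]
          have e1 : (4:ℕ)^(k+1-1) = 4 * 4^(k-1) := by
            have h1 : k+1-1 = (k-1)+1 := by omega
            rw [h1, pow_succ]; ring
          rw [e1]
          simp only [pow_zero, mul_one] at hb3 hb4 ⊢
          have efin : r * (4 * 4^(k-1)) = 4 * (r * 4^(k-1)) := by ring
          rw [efin]
          omega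

/-- For `s, t` powers of two with `t ≥ s ≥ 2^(k-1)`, we have
`f_{r,k}(t,s) ≤ r·2^(2k-2)·(t/s)²`. -/
theorem stmt7 (r k s t : ℕ) (hr : 1 ≤ r) (hk : 1 ≤ k)
    (hs : ∃ a : ℕ, s = 2 ^ a) (ht : ∃ b : ℕ, t = 2 ^ b)
    (hst : s ≤ t) (hks : 2 ^ (k - 1) ≤ s) :
    frk r k t s ≤ r * 2 ^ (2 * k - 2) * (t / s) ^ 2 := by
  obtain ⟨a, rfl⟩ := hs
  obtain ⟨b, rfl⟩ := ht
  have hab : a ≤ b := (Nat.pow_le_pow_iff_right (by norm_num)).mp hst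
  have hka : k - 1 ≤ a := (Nat.pow_le_pow_iff_right (by norm_num)).mp hks
  have hkey : r * 4^(k-1) * 4^(b-a) = r * 2^(2*k-2) * (2^b / 2^a)^2 := by
    rw [Nat.pow_div hab (by norm_num)]
    have e1 : (4:ℕ)^(k-1) = 2^(2*k-2) := by
      rw [show (4:ℕ) = 2^2 from rfl, ← pow_mul]
      congr 1
      omega
    have e2 : (4:ℕ)^(b-a) = (2^(b-a))^2 := by
      rw [show (4:ℕ) = 2^2 from rfl, ← pow_mul, ← pow_mul]
      congr 1
      omega
    rw [e1, e2]
  rw [frk, ← hkey]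
  refine csSup_le' ?_
  intro h hh
  obtain ⟨A, hno, hrow⟩ := hh
  exact mainBound r hr k b a h hk hka hab A hno hrow
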